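/- For the binary entropy function h(x) = -x log x - (1-x) log(1-x), the inequality h(x) - 2h(x/2) ≤ -(2/3)x holds for all x ∈ [0,1]. -/

import Mathlib

/-- The binary entropy function `h(x) = -x log x - (1-x) log(1-x)`. -/
noncomputable def binEnt (x : ℝ) : ℝ := -x * Real.log x - (1 - x) * Real.log (1 - x)

private noncomputable def gAux (x : ℝ) : ℝ :=
  (2 - x) * Real.log (2 - x) - (1 - x) * Real.log (1 - x) + (2 / 3) * x

private lemma gAux_hasDerivAt {x : ℝ} (hx1 : x < 1) :
    HasDerivAt gAux (Real.log (1 - x) - Real.log (2 - x) + 2 / 3) x := by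
  have h2 : (2 : ℝ) - x ≠ 0 := by linarith
  have h1 : (1 : ℝ) - x ≠ 0 := by linarith
  have hu : HasDerivAt (fun y : ℝ => 2 - y) (-1) x := by
    simpa using (hasDerivAt_id' x).const_sub (2:ℝ)
  have hv : HasDerivAt (fun y : ℝ => 1 - y) (-1) x := by
    simpa using (hasDerivAt_id' x).const_sub (1:ℝ)
  have hA : HasDerivAt (fun y : ℝ => (2 - y) * Real.log (2 - y))
      (-(Real.log (2 - x) + 1)) x := by
    have := hu.mul (hu.log h2)
    refine this.congr_deriv ?_
    field_simp
    ring
  have hB : HasDerivAt (fun y : ℝ => (1 - y) * Real.log (1 - y))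
      (-(Real.log (1 - x) + 1)) x := by
    have := hv.mul (hv.log h1)
    refine this.congr_deriv ?_
    field_simp
    ring
  have hC : HasDerivAt (fun y : ℝ => (2 / 3 : ℝ) * y) (2 / 3) x := by
    simpa using (hasDerivAt_id x).const_mul (2/3 : ℝ)
  have := (hA.sub hB).add hC
  refine this.congr_deriv ?_
  ring

private lemma gAux_antitone : AntitoneOn gAux (Set.Icc (0:ℝ) 1) := by
  have hcont : ContinuousOn gAux (Set.Icc (0:ℝ) 1) := by
    apply ContinuousOn.add
    · apply ContinuousOn.sub
      · exact (Real.continuous_mul_log.comp (continuous_const.sub continuous_id)).continuousOn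
      · exact (Real.continuous_mul_log.comp (continuous_const.sub continuous_id)).continuousOn
    · exact (continuous_const.mul continuous_id).continuousOn
  have hderiv : ∀ x ∈ interior (Set.Icc (0:ℝ) 1), deriv gAux x < 0 := by
    intro x hx
    rw [interior_Icc] at hx
    obtain ⟨hx0, hx1⟩ := hx
    rw [(gAux_hasDerivAt hx1).deriv]
    have hlog : Real.log (1 - x) ≤ Real.log ((2 - x) / 2) :=
      Real.log_le_log (by linarith) (by linarith)
    rw [Real.log_div (by linarith) two_ne_zero] at hlog
    have := Real.log_two_gt_d9
    linarith
  exact (strictAntiOn_of_deriv_neg (convex_Icc 0 1) hcont hderiv).antitoneOn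

/-- For all `x ∈ [0,1]`, `h(x) - 2h(x/2) ≤ -(2/3)x`. -/
theorem binEnt_sub_two_half_le (x : ℝ) (hx : x ∈ Set.Icc (0 : ℝ) 1) :
    binEnt x - 2 * binEnt (x / 2) ≤ -(2 / 3) * x := by
  obtain ⟨hx0, hx1⟩ := hx
  have key : gAux x ≤ gAux 0 :=
    gAux_antitone (by simp) ⟨hx0, hx1⟩ hx0
  have hg0 : gAux 0 = 2 * Real.log 2 := by simp [gAux]
  have hlogx2 : x * Real.log (x / 2) = x * Real.log x - x * Real.log 2 := by
    rcases eq_or_ne x 0 with h | h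
    · simp [h]
    · rw [Real.log_div h two_ne_zero]; ring
  have hlog1x2 : Real.log (1 - x / 2) = Real.log (2 - x) - Real.log 2 := by
    have : 1 - x / 2 = (2 - x) / 2 := by ring
    rw [this, Real.log_div (by linarith) two_ne_zero]
  have expand : binEnt x - 2 * binEnt (x / 2) =
      gAux x - (2 / 3) * x - 2 * Real.log 2 := by
    simp only [binEnt, gAux, hlog1x2]
    have : -(x/2) * Real.log (x/2) = -(x * Real.log (x/2)) / 2 := by ring
    rw [this, hlogx2]
    ring
  rw [expand]; rw [hg0] at key
  linarith
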